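/- If P and Q are diagonal matrices of order n (with finite diagonal entries) and A is an n×n matrix over the max-plus semiring, then maper(A⊠Q) = n·maper(A) + n·maper(Q) and maper(P⊠A) = n·maper(P) + n·maper(A). -/

import Mathlib

/-!  Max-plus (tropical) semiring `MP = ℝ ∪ {ε}`, `ε = -∞ = ⊥`,
`a ⊕ b = max a b` and `a ⊗ b = a + b`. -/

abbrev MP := WithBot ℝ

/-- Tropical (max-plus) matrix product: `(A ⊗ B) i j = max_k (A i k + B k j)`. -/
noncomputable def mpMul {α β γ : Type*} [Fintype β] (A : Matrix α β MP) (B : Matrix β γ MP) :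
    Matrix α γ MP :=
  fun i j => Finset.univ.sup fun k => A i k + B k j

/-- Tropical matrix-vector product: `(A ⊗ x) i = max_k (A i k + x k)`. -/
noncomputable def mpMulVec {α β : Type*} [Fintype β] (A : Matrix α β MP) (x : β → MP) : α → MP :=
  fun i => Finset.univ.sup fun k => A i k + x k

/-- Diagonal matrix with finite diagonal entries `d i` and off-diagonal entries `ε`. -/
noncomputable def mpDiag {α : Type*} [DecidableEq α] (d : α → ℝ) : Matrix α α MP :=
  fun i j => if i = j then (d i : MP) else ⊥

/-- Tropical permanent: `maper A = max_{π} Σ_i A i (π i)`. -/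
noncomputable def maper {α : Type*} [Fintype α] [DecidableEq α] (A : Matrix α α MP) : MP :=
  Finset.univ.sup fun π : Equiv.Perm α => ∑ i, A i (π i)

/-- Maximum cycle mean:
`λ(A) = sup { (A i₁ i₂ + A i₂ i₃ + ⋯ + A iₖ i₁)/k : k ≥ 1, i₁,…,iₖ }` (`ε` if none finite). -/
noncomputable def mcm {α : Type*} [Fintype α] (A : Matrix α α MP) : MP :=
  sSup {x : MP | ∃ k : ℕ, ∃ hk : 0 < k, ∃ f : Fin k → α,
    x = WithBot.map (fun w : ℝ => w / (k : ℝ))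
      (∑ i : Fin k, A (f i) (f ⟨(i.1 + 1) % k, Nat.mod_lt _ hk⟩))}

/-- Tropical tensor product `A ⊠ B`: the block matrix whose `(k,l)` block is `A ⊗ B k l`;
the row index `(k, i)` denotes position `i` inside block row `k`. -/
noncomputable def mpTensor {α β γ δ : Type*} (A : Matrix α β MP) (B : Matrix γ δ MP) :
    Matrix (γ × α) (δ × β) MP :=
  fun p q => A p.2 q.2 + B p.1 q.1

/-- Tensor product of column vectors: `(x ⊠ y) (k, i) = x i + y k`. -/
noncomputable def mpTensorVec {α γ : Type*} (x : α → MP) (y : γ → MP) : γ × α → MP :=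
  fun p => x p.2 + y p.1

/-- The tropical unit matrix: `0` on the diagonal, `ε` elsewhere. -/
noncomputable def mpUnit (α : Type*) [DecidableEq α] : Matrix α α MP :=
  fun i j => if i = j then 0 else ⊥

/-- `vec X`: the columns of `X` stacked; component `(c, r)` is `X r c`. -/
def mpVec {α β : Type*} (X : Matrix α β MP) : β × α → MP := fun p => X p.2 p.1



lemma mp_sum_eq_bot {α : Type*} [Fintype α] [DecidableEq α] (f : α → MP) (a : α)
    (h : f a = ⊥) : ∑ i, f i = ⊥ := by
  rw [← Finset.add_sum_erase _ f (Finset.mem_univ a), h, WithBot.bot_add]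

lemma maper_mpDiag (n : ℕ) (q : Fin n → ℝ) :
    maper (mpDiag q) = ((∑ k, q k : ℝ) : MP) := by
  unfold maper
  apply le_antisymm
  · apply Finset.sup_le
    intro π _
    by_cases hπ : ∀ i, π i = i
    · have : ∀ i, mpDiag q i (π i) = ((q i : ℝ) : MP) := by
        intro i; simp [mpDiag, hπ i]
      simp only [this]
      rw [← WithBot.coe_sum]
    · push_neg at hπ
      obtain ⟨i, hi⟩ := hπ
      have hb : mpDiag q i (π i) = ⊥ := by simp [mpDiag, (Ne.symm hi)]
      rw [mp_sum_eq_bot _ i hb]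
      exact bot_le
  · refine le_trans (le_of_eq ?_) (Finset.le_sup (Finset.mem_univ (1 : Equiv.Perm (Fin n))))
    simp [mpDiag, ← WithBot.coe_sum]

lemma maper_reindex {α β : Type*} [Fintype α] [DecidableEq α] [Fintype β] [DecidableEq β]
    (e : β ≃ α) (A : Matrix α α MP) :
    maper (fun i j => A (e i) (e j)) = maper A := by
  unfold maper
  apply le_antisymm
  · apply Finset.sup_le
    intro π _
    refine le_trans (le_of_eq ?_) (Finset.le_sup (Finset.mem_univ (e.symm.trans (π.trans e))))
    rw [← Equiv.sum_comp e (fun j => A j ((e.symm.trans (π.trans e)) j))]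
    simp
  · apply Finset.sup_le
    intro π _
    refine le_trans (le_of_eq ?_) (Finset.le_sup (Finset.mem_univ (e.trans (π.trans e.symm))))
    rw [← Equiv.sum_comp e.symm (fun j => A (e j) (e ((e.trans (π.trans e.symm)) j)))]
    simp

lemma maper_tensor_diag_right (n : ℕ) (q : Fin n → ℝ) (A : Matrix (Fin n) (Fin n) MP) :
    maper (mpTensor A (mpDiag q)) = n • maper A + n • ((∑ k, q k : ℝ) : MP) := by
  rcases Nat.eq_zero_or_pos n with hn | hn
  · subst hn
    simp [maper, Finset.sup_const, Finset.univ_nonempty]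
  unfold maper
  set S : MP := Finset.univ.sup fun π : Equiv.Perm (Fin n) => ∑ i, A i (π i) with hS
  have key : ∀ (σ : Fin n → Equiv.Perm (Fin n)),
      ∑ p : Fin n × Fin n, (A p.2 ((σ p.1) p.2) + ((q p.1 : ℝ) : MP))
        = ∑ k, ((∑ i, A i ((σ k) i)) + n • ((q k : ℝ) : MP)) := by
    intro σ
    rw [Fintype.sum_prod_type]
    refine Finset.sum_congr rfl fun k _ => ?_
    simp [Finset.sum_add_distrib]
  have rhs_eq : ∑ k : Fin n, (S + n • ((q k : ℝ) : MP))
      = n • S + n • ((∑ k, q k : ℝ) : MP) := by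
    rw [Finset.sum_add_distrib, Finset.sum_const, Finset.card_univ, Fintype.card_fin]
    congr 1
    rw [WithBot.coe_sum, Finset.smul_sum]
  apply le_antisymm
  · apply Finset.sup_le
    intro π _
    by_cases hπ : ∀ p : Fin n × Fin n, (π p).1 = p.1
    · have hinj : ∀ k : Fin n, Function.Injective (fun i => (π (k, i)).2) := by
        intro k i i' hii'
        have h1 : π (k, i) = π (k, i') :=
          Prod.ext (by rw [hπ (k, i), hπ (k, i')]) hii'
        exact (Prod.mk.injEq _ _ _ _).mp (π.injective h1) |>.2
      let σ : Fin n → Equiv.Perm (Fin n) := fun k =>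
        Equiv.ofBijective _ (Finite.injective_iff_bijective.mp (hinj k))
      have hval : ∀ p : Fin n × Fin n,
          mpTensor A (mpDiag q) p (π p) = A p.2 ((σ p.1) p.2) + ((q p.1 : ℝ) : MP) := by
        intro p
        simp only [mpTensor, mpDiag, hπ p, if_pos rfl]
        rfl
      calc ∑ p : Fin n × Fin n, mpTensor A (mpDiag q) p (π p)
          = ∑ k, ((∑ i, A i ((σ k) i)) + n • ((q k : ℝ) : MP)) := by
            rw [Finset.sum_congr rfl (fun p _ => hval p)]; exact key σ
        _ ≤ ∑ k : Fin n, (S + n • ((q k : ℝ) : MP)) := by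
            refine Finset.sum_le_sum fun k _ => ?_
            have h1 : (∑ i, A i ((σ k) i)) ≤ S :=
              Finset.le_sup (f := fun π : Equiv.Perm (Fin n) => ∑ i, A i (π i))
                (Finset.mem_univ (σ k))
            exact add_le_add_left h1 _
        _ = n • S + n • ((∑ k, q k : ℝ) : MP) := rhs_eq
    · push_neg at hπ
      obtain ⟨p₀, hp₀⟩ := hπ
      have hb : mpTensor A (mpDiag q) p₀ (π p₀) = ⊥ := by
        simp [mpTensor, mpDiag, Ne.symm hp₀]
      rw [mp_sum_eq_bot _ p₀ hb]
      exact bot_le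
  · obtain ⟨σ, -, hσ⟩ := Finset.exists_mem_eq_sup (Finset.univ : Finset (Equiv.Perm (Fin n)))
      Finset.univ_nonempty (fun π : Equiv.Perm (Fin n) => ∑ i, A i (π i))
    refine le_trans (le_of_eq ?_)
      (Finset.le_sup (Finset.mem_univ (Equiv.prodCongr (Equiv.refl (Fin n)) σ)))
    have hval2 : ∀ p : Fin n × Fin n,
        mpTensor A (mpDiag q) p ((Equiv.prodCongr (Equiv.refl (Fin n)) σ) p)
          = A p.2 (σ p.2) + ((q p.1 : ℝ) : MP) := by
      intro p
      simp [mpTensor, mpDiag]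
    rw [Finset.sum_congr rfl (fun p _ => hval2 p), key (fun _ => σ), ← rhs_eq]
    exact Finset.sum_congr rfl fun k _ => by rw [hS, hσ]

/-- For diagonal `P, Q` of order `n` (finite diagonal entries) and an
`n × n` matrix `A`, `maper (A ⊠ Q) = n • maper A + n • maper Q` and
`maper (P ⊠ A) = n • maper P + n • maper A`. -/
theorem maper_tensor_diag (n : ℕ) (p q : Fin n → ℝ) (A : Matrix (Fin n) (Fin n) MP) :
    maper (mpTensor A (mpDiag q)) = n • maper A + n • maper (mpDiag q) ∧
    maper (mpTensor (mpDiag p) A) = n • maper (mpDiag p) + n • maper A := by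
  constructor
  · rw [maper_mpDiag, maper_tensor_diag_right]
  · have heq : mpTensor (mpDiag p) A
        = fun x y => mpTensor A (mpDiag p) ((Equiv.prodComm (Fin n) (Fin n)) x)
            ((Equiv.prodComm (Fin n) (Fin n)) y) := by
      funext x y
      simp [mpTensor, add_comm]
    rw [heq, maper_reindex, maper_mpDiag, maper_tensor_diag_right, add_comm]
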